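/- Let Φ be a continuous cocycle over (ℝ, {θ₁(t)}) with θ₁(t)(h) = h + t, let 𝒟 be a neighborhood closed collection of families of nonempty subsets of X, and suppose Φ is 𝒟-pullback asymptotically compact in X and has a closed measurable 𝒟-pullback absorbing set K ∈ 𝒟. Then the unique 𝒟-pullback attractor 𝒜 of Φ satisfies, for every τ ∈ ℝ and ω ∈ Ω₂: 𝒜(τ,ω) = { ξ(τ,ω) : ξ is a 𝒟-complete quasi-solution of Φ }. -/

import Mathlib

open MeasureTheory Filter Set Topology
open scoped ENNReal

namespace RDS

/-- A group of transformations of `α` parametrized by `ℝ`. -/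
def IsGroupAction {α : Type*} (θ : ℝ → α → α) : Prop :=
  (∀ a, θ 0 a = a) ∧ ∀ s t : ℝ, ∀ a, θ (s + t) a = θ t (θ s a)

variable {Ω₁ Ω₂ X : Type*} [MetricSpace X] [MeasurableSpace X] [MeasurableSpace Ω₂]

/-- A continuous cocycle on `X` over the parametric dynamical systems
`(Ω₁, θ₁)` and `(Ω₂, ℱ₂, P, θ₂)` (Definition 2.1). -/
structure IsCocycle (θ₁ : ℝ → Ω₁ → Ω₁) (θ₂ : ℝ → Ω₂ → Ω₂)
    (Φ : ℝ → Ω₁ → Ω₂ → X → X) : Prop where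
  measurable : ∀ ω₁ : Ω₁,
    Measurable fun p : {t : ℝ // 0 ≤ t} × Ω₂ × X => Φ p.1.1 ω₁ p.2.1 p.2.2
  map_zero : ∀ (ω₁ : Ω₁) (ω₂ : Ω₂) (x : X), Φ 0 ω₁ ω₂ x = x
  cocycle : ∀ t τ : ℝ, 0 ≤ t → 0 ≤ τ → ∀ (ω₁ : Ω₁) (ω₂ : Ω₂) (x : X),
    Φ (t + τ) ω₁ ω₂ x = Φ t (θ₁ τ ω₁) (θ₂ τ ω₂) (Φ τ ω₁ ω₂ x)
  continuous : ∀ t : ℝ, 0 ≤ t → ∀ (ω₁ : Ω₁) (ω₂ : Ω₂),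
    Continuous fun x : X => Φ t ω₁ ω₂ x

/-- A complete orbit of the cocycle `Φ` (Definition 2.9). -/
def IsCompleteOrbit (θ₁ : ℝ → Ω₁ → Ω₁) (θ₂ : ℝ → Ω₂ → Ω₂)
    (Φ : ℝ → Ω₁ → Ω₂ → X → X) (ψ : ℝ → Ω₁ → Ω₂ → X) : Prop :=
  ∀ t τ : ℝ, 0 ≤ t → ∀ (ω₁ : Ω₁) (ω₂ : Ω₂),
    Φ t (θ₁ τ ω₁) (θ₂ τ ω₂) (ψ τ ω₁ ω₂) = ψ (t + τ) ω₁ ω₂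

/-- A `𝒟`-complete orbit of `Φ`. -/
def IsDCompleteOrbit (θ₁ : ℝ → Ω₁ → Ω₁) (θ₂ : ℝ → Ω₂ → Ω₂)
    (Φ : ℝ → Ω₁ → Ω₂ → X → X) (𝒟 : Set (Ω₁ → Ω₂ → Set X))
    (ψ : ℝ → Ω₁ → Ω₂ → X) : Prop :=
  IsCompleteOrbit θ₁ θ₂ Φ ψ ∧
    ∃ D ∈ 𝒟, ∀ (t : ℝ) (ω₁ : Ω₁) (ω₂ : Ω₂), ψ t ω₁ ω₂ ∈ D (θ₁ t ω₁) (θ₂ t ω₂)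

/-- Positive invariance of a family under `Φ`. -/
def PositivelyInvariant (θ₁ : ℝ → Ω₁ → Ω₁) (θ₂ : ℝ → Ω₂ → Ω₂)
    (Φ : ℝ → Ω₁ → Ω₂ → X → X) (B : Ω₁ → Ω₂ → Set X) : Prop :=
  ∀ t : ℝ, 0 ≤ t → ∀ (ω₁ : Ω₁) (ω₂ : Ω₂),
    Φ t ω₁ ω₂ '' B ω₁ ω₂ ⊆ B (θ₁ t ω₁) (θ₂ t ω₂)

/-- Invariance of a family under `Φ`. -/
def Invariant (θ₁ : ℝ → Ω₁ → Ω₁) (θ₂ : ℝ → Ω₂ → Ω₂)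
    (Φ : ℝ → Ω₁ → Ω₂ → X → X) (B : Ω₁ → Ω₂ → Set X) : Prop :=
  ∀ t : ℝ, 0 ≤ t → ∀ (ω₁ : Ω₁) (ω₂ : Ω₂),
    Φ t ω₁ ω₂ '' B ω₁ ω₂ = B (θ₁ t ω₁) (θ₂ t ω₂)

/-- Quasi-invariance of a family under `Φ`. -/
def QuasiInvariant (θ₁ : ℝ → Ω₁ → Ω₁) (θ₂ : ℝ → Ω₂ → Ω₂)
    (Φ : ℝ → Ω₁ → Ω₂ → X → X) (B : Ω₁ → Ω₂ → Set X) : Prop :=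
  ∀ y : Ω₁ → Ω₂ → X, (∀ (ω₁ : Ω₁) (ω₂ : Ω₂), y ω₁ ω₂ ∈ B ω₁ ω₂) →
    ∃ ψ : ℝ → Ω₁ → Ω₂ → X, IsCompleteOrbit θ₁ θ₂ Φ ψ ∧
      (∀ (ω₁ : Ω₁) (ω₂ : Ω₂), ψ 0 ω₁ ω₂ = y ω₁ ω₂) ∧
      ∀ (t : ℝ) (ω₁ : Ω₁) (ω₂ : Ω₂), ψ t ω₁ ω₂ ∈ B (θ₁ t ω₁) (θ₂ t ω₂)

/-- The Ω-limit set of a family `B` (Definition 2.13). -/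
def omegaLimit (θ₁ : ℝ → Ω₁ → Ω₁) (θ₂ : ℝ → Ω₂ → Ω₂)
    (Φ : ℝ → Ω₁ → Ω₂ → X → X) (B : Ω₁ → Ω₂ → Set X) (ω₁ : Ω₁) (ω₂ : Ω₂) : Set X :=
  ⋂ τ ∈ Ici (0 : ℝ), closure (⋃ t ∈ Ici τ,
    Φ t (θ₁ (-t) ω₁) (θ₂ (-t) ω₂) '' B (θ₁ (-t) ω₁) (θ₂ (-t) ω₂))

/-- `𝒟` is a collection of families of nonempty subsets of `X`. -/
def FamiliesOfNonemptySets (𝒟 : Set (Ω₁ → Ω₂ → Set X)) : Prop :=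
  ∀ D ∈ 𝒟, ∀ (ω₁ : Ω₁) (ω₂ : Ω₂), (D ω₁ ω₂).Nonempty

/-- Neighborhood closedness of the collection `𝒟` (Definition 2.5). -/
def NeighborhoodClosed (𝒟 : Set (Ω₁ → Ω₂ → Set X)) : Prop :=
  ∀ D ∈ 𝒟, ∃ ε : ℝ, 0 < ε ∧ ∀ B : Ω₁ → Ω₂ → Set X,
    (∀ (ω₁ : Ω₁) (ω₂ : Ω₂), (B ω₁ ω₂).Nonempty ∧
      B ω₁ ω₂ ⊆ Metric.thickening ε (D ω₁ ω₂)) → B ∈ 𝒟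

/-- Inclusion closedness of the collection `𝒟`. -/
def InclusionClosed (𝒟 : Set (Ω₁ → Ω₂ → Set X)) : Prop :=
  ∀ D ∈ 𝒟, ∀ B : Ω₁ → Ω₂ → Set X,
    (∀ (ω₁ : Ω₁) (ω₂ : Ω₂), (B ω₁ ω₂).Nonempty ∧ B ω₁ ω₂ ⊆ D ω₁ ω₂) → B ∈ 𝒟

/-- `𝒟`-pullback asymptotic compactness of `Φ` (Definition 2.16). -/
def AsymptoticallyCompact (θ₁ : ℝ → Ω₁ → Ω₁) (θ₂ : ℝ → Ω₂ → Ω₂)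
    (Φ : ℝ → Ω₁ → Ω₂ → X → X) (𝒟 : Set (Ω₁ → Ω₂ → Set X)) : Prop :=
  ∀ (ω₁ : Ω₁) (ω₂ : Ω₂), ∀ B ∈ 𝒟, ∀ (t : ℕ → ℝ) (x : ℕ → X),
    Tendsto t atTop atTop →
    (∀ n, x n ∈ B (θ₁ (-t n) ω₁) (θ₂ (-t n) ω₂)) →
    ∃ (φ : ℕ → ℕ) (y : X), StrictMono φ ∧
      Tendsto (fun n => Φ (t (φ n)) (θ₁ (-t (φ n)) ω₁) (θ₂ (-t (φ n)) ω₂) (x (φ n)))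
        atTop (𝓝 y)

/-- The Hausdorff semi-metric `d(C,B) = sup_{x ∈ C} inf_{b ∈ B} d(x,b)`,
valued in `ℝ≥0∞`. -/
noncomputable def hausSemidist (C B : Set X) : ℝ≥0∞ :=
  ⨆ x ∈ C, EMetric.infEdist x B

/-- The family `A` pullback attracts the family `B` under `Φ`. -/
def Attracts (θ₁ : ℝ → Ω₁ → Ω₁) (θ₂ : ℝ → Ω₂ → Ω₂)
    (Φ : ℝ → Ω₁ → Ω₂ → X → X) (B A : Ω₁ → Ω₂ → Set X) : Prop :=
  ∀ (ω₁ : Ω₁) (ω₂ : Ω₂),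
    Tendsto (fun t : ℝ => hausSemidist
        (Φ t (θ₁ (-t) ω₁) (θ₂ (-t) ω₂) '' B (θ₁ (-t) ω₁) (θ₂ (-t) ω₂)) (A ω₁ ω₂))
      atTop (𝓝 0)

/-- A `𝒟`-pullback absorbing set for `Φ` (Definition 2.15). -/
def IsAbsorbingSet (θ₁ : ℝ → Ω₁ → Ω₁) (θ₂ : ℝ → Ω₂ → Ω₂)
    (Φ : ℝ → Ω₁ → Ω₂ → X → X) (𝒟 : Set (Ω₁ → Ω₂ → Set X))
    (K : Ω₁ → Ω₂ → Set X) : Prop :=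
  K ∈ 𝒟 ∧ ∀ (ω₁ : Ω₁) (ω₂ : Ω₂), ∀ B ∈ 𝒟, ∃ T : ℝ, 0 < T ∧ ∀ t : ℝ, T ≤ t →
    Φ t (θ₁ (-t) ω₁) (θ₂ (-t) ω₂) '' B (θ₁ (-t) ω₁) (θ₂ (-t) ω₂) ⊆ K ω₁ ω₂

/-- A closed measurable (w.r.t. the `P`-completion of `ℱ₂`) `𝒟`-pullback
absorbing set for `Φ`. -/
def IsClosedMeasurableAbsorbingSet (θ₁ : ℝ → Ω₁ → Ω₁) (θ₂ : ℝ → Ω₂ → Ω₂)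
    (Φ : ℝ → Ω₁ → Ω₂ → X → X) (P : Measure Ω₂) (𝒟 : Set (Ω₁ → Ω₂ → Set X))
    (K : Ω₁ → Ω₂ → Set X) : Prop :=
  IsAbsorbingSet θ₁ θ₂ Φ 𝒟 K ∧
    (∀ (ω₁ : Ω₁) (ω₂ : Ω₂), IsClosed (K ω₁ ω₂) ∧ (K ω₁ ω₂).Nonempty) ∧
    ∀ (ω₁ : Ω₁) (x : X), NullMeasurable (fun ω₂ => Metric.infDist x (K ω₁ ω₂)) P

/-- A `𝒟`-pullback attractor for `Φ` (Definition 2.17). -/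
structure IsPullbackAttractor (θ₁ : ℝ → Ω₁ → Ω₁) (θ₂ : ℝ → Ω₂ → Ω₂)
    (Φ : ℝ → Ω₁ → Ω₂ → X → X) (P : Measure Ω₂) (𝒟 : Set (Ω₁ → Ω₂ → Set X))
    (A : Ω₁ → Ω₂ → Set X) : Prop where
  mem : A ∈ 𝒟
  compact : ∀ (ω₁ : Ω₁) (ω₂ : Ω₂), IsCompact (A ω₁ ω₂)
  measurable : ∀ (ω₁ : Ω₁) (x : X),
    NullMeasurable (fun ω₂ => Metric.infDist x (A ω₁ ω₂)) P
  invariant : Invariant θ₁ θ₂ Φ A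
  attracts : ∀ B ∈ 𝒟, Attracts θ₁ θ₂ Φ B A

/-- A complete quasi-solution of `Φ` in the sense of (2.20): a map
`ξ : ℝ × Ω₂ → X` with `Φ(t, τ, ω, ξ(τ, ω)) = ξ(t + τ, θ₂(t) ω)` for all
`t ≥ 0`, `τ ∈ ℝ`, `ω ∈ Ω₂`. -/
def IsQuasiSolution {Ω₂ X : Type*} [MetricSpace X] [MeasurableSpace X]
    [MeasurableSpace Ω₂] (θ₂ : ℝ → Ω₂ → Ω₂) (Φ : ℝ → ℝ → Ω₂ → X → X)
    (ξ : ℝ → Ω₂ → X) : Prop :=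
  ∀ t τ : ℝ, 0 ≤ t → ∀ ω₂ : Ω₂, Φ t τ ω₂ (ξ τ ω₂) = ξ (t + τ) (θ₂ t ω₂)


section Selection

open TopologicalSpace Metric

variable {Ω : Type*} [MeasurableSpace Ω] {X : Type*} [MetricSpace X] [CompleteSpace X]
  [SecondCountableTopology X] [Nonempty X] [MeasurableSpace X] [BorelSpace X]

lemma dense_approx (K : Set X) (hne : K.Nonempty) {ε : ℝ} (hε : 0 < ε) :
    ∃ k : ℕ, infDist (denseSeq X k) K < ε := by
  obtain ⟨y, hy⟩ := hne
  obtain ⟨k, hk⟩ := (denseRange_denseSeq X).exists_dist_lt y hε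
  exact ⟨k, lt_of_le_of_lt (by simpa [dist_comm] using infDist_le_dist_of_mem hy) hk⟩

lemma exists_selection_close (K : Ω → Set X) (hcl : ∀ ω, IsClosed (K ω))
    (hne : ∀ ω, (K ω).Nonempty)
    (hmeas : ∀ x : X, Measurable fun ω => infDist x (K ω))
    {f₀ : Ω → ℕ} (hf₀ : Measurable f₀) {ε : ℝ} (hε : 0 < ε)
    (h₀ : ∀ ω, infDist (denseSeq X (f₀ ω)) (K ω) < ε) :
    ∃ s : Ω → X, Measurable s ∧ ∀ ω, s ω ∈ K ω ∧ dist (s ω) (denseSeq X (f₀ ω)) ≤ 3 * ε := by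
  classical
  set q := denseSeq X with hq
  -- the refinement step
  have step : ∀ (p : ℕ) (n : {n : Ω → ℕ // Measurable n ∧
      ∀ ω, infDist (q (n ω)) (K ω) < ε / 2 ^ p}),
      ∃ n' : {n : Ω → ℕ // Measurable n ∧ ∀ ω, infDist (q (n ω)) (K ω) < ε / 2 ^ (p + 1)},
        ∀ ω, dist (q (n'.1 ω)) (q (n.1 ω)) < ε / 2 ^ p + ε / 2 ^ (p + 1) := by
    intro p n
    have hex : ∀ ω, ∃ k : ℕ, infDist (q k) (K ω) < ε / 2 ^ (p + 1) ∧
        dist (q k) (q (n.1 ω)) < ε / 2 ^ p + ε / 2 ^ (p + 1) := by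
      intro ω
      obtain ⟨y, hyK, hy⟩ := (infDist_lt_iff (hne ω)).1 (n.2.2 ω)
      have hδpos : 0 < min (ε / 2 ^ (p + 1)) (ε / 2 ^ p + ε / 2 ^ (p + 1) - dist (q (n.1 ω)) y) := by
        have : 0 < ε / 2 ^ (p+1) := by positivity
        exact lt_min this (by linarith)
      obtain ⟨k, hk⟩ := (denseRange_denseSeq X).exists_dist_lt y hδpos
      rw [dist_comm] at hk
      refine ⟨k, lt_of_le_of_lt (infDist_le_dist_of_mem hyK)
        (lt_of_lt_of_le hk (min_le_left _ _)), ?_⟩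
      calc dist (q k) (q (n.1 ω)) ≤ dist (q k) y + dist y (q (n.1 ω)) := dist_triangle _ _ _
        _ < min (ε / 2 ^ (p + 1)) (ε / 2 ^ p + ε / 2 ^ (p + 1) - dist (q (n.1 ω)) y)
            + dist y (q (n.1 ω)) := by linarith
        _ ≤ _ := by
            rw [dist_comm y]
            have := min_le_right (ε / 2 ^ (p + 1)) (ε / 2 ^ p + ε / 2 ^ (p + 1) - dist (q (n.1 ω)) y)
            linarith
    have hPmeas : ∀ k : ℕ, MeasurableSet {ω | infDist (q k) (K ω) < ε / 2 ^ (p + 1) ∧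
        dist (q k) (q (n.1 ω)) < ε / 2 ^ p + ε / 2 ^ (p + 1)} := by
      intro k
      refine MeasurableSet.inter ?_ ?_
      · exact (hmeas (q k)) measurableSet_Iio
      · exact n.2.1 (by trivial : MeasurableSet {j : ℕ | dist (q k) (q j) < ε / 2 ^ p + ε / 2 ^ (p + 1)})
    refine ⟨⟨fun ω => Nat.find (hex ω), ?_, fun ω => (Nat.find_spec (hex ω)).1⟩,
      fun ω => (Nat.find_spec (hex ω)).2⟩
    exact measurable_find _ hPmeas
  choose F hF using step
  have hc0 : ∀ ω, infDist (q (f₀ ω)) (K ω) < ε / 2 ^ 0 := by simpa using h₀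
  let chain : (p : ℕ) → {n : Ω → ℕ // Measurable n ∧ ∀ ω, infDist (q (n ω)) (K ω) < ε / 2 ^ p} :=
    fun p => Nat.rec ⟨f₀, hf₀, hc0⟩ (fun p ih => F p ih) p
  have hchain : ∀ p, chain (p + 1) = F p (chain p) := fun p => rfl
  set f : ℕ → Ω → X := fun p ω => q ((chain p).1 ω) with hfdef
  have hdist : ∀ (ω : Ω) (p : ℕ), dist (f p ω) (f (p + 1) ω) ≤ 3 / 2 * ε * (1 / 2) ^ p := by
    intro ω p
    have := hF p (chain p) ω
    rw [← hchain p] at this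
    rw [dist_comm]
    have h2 : ε / 2 ^ p + ε / 2 ^ (p + 1) = 3 / 2 * ε * (1 / 2) ^ p := by
      rw [div_pow, one_pow, pow_succ]; field_simp; ring
    simpa [hfdef, h2] using this.le
  have hcauchy : ∀ ω, CauchySeq fun p => f p ω := fun ω =>
    cauchySeq_of_le_geometric (1 / 2) (3 / 2 * ε) (by norm_num) (hdist ω)
  have hlim : ∀ ω, ∃ x : X, Tendsto (fun p => f p ω) atTop (𝓝 x) := fun ω =>
    cauchySeq_tendsto_of_complete (hcauchy ω)
  choose s hs using hlim
  have hmeasf : ∀ p, Measurable (f p) := fun p =>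
    (measurable_from_top (f := q)).comp (chain p).2.1
  refine ⟨s, measurable_of_tendsto_metrizable hmeasf (tendsto_pi_nhds.2 hs), fun ω => ⟨?_, ?_⟩⟩
  · -- membership
    have h1 : Tendsto (fun p => infDist (f p ω) (K ω)) atTop (𝓝 (infDist (s ω) (K ω))) :=
      ((continuous_infDist_pt (K ω)).tendsto _).comp (hs ω)
    have h2 : Tendsto (fun p : ℕ => ε / 2 ^ p) atTop (𝓝 0) := by
      simpa [div_eq_mul_inv, ← inv_pow] using
        (tendsto_pow_atTop_nhds_zero_of_lt_one (by norm_num : (0:ℝ) ≤ (2:ℝ)⁻¹)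
          (by norm_num : (2:ℝ)⁻¹ < 1)).const_mul ε
    have hle : infDist (s ω) (K ω) ≤ 0 :=
      le_of_tendsto_of_tendsto h1 h2 (Eventually.of_forall fun p => ((chain p).2.2 ω).le)
    have : infDist (s ω) (K ω) = 0 := le_antisymm hle infDist_nonneg
    exact ((hcl ω).mem_iff_infDist_zero (hne ω)).2 this
  · -- distance bound
    have := dist_le_of_le_geometric_of_tendsto₀ (1 / 2) (3 / 2 * ε)
      (by norm_num : (1:ℝ)/2 < 1) (hdist ω) (hs ω)
    have h3 : (3:ℝ) / 2 * ε / (1 - 1 / 2) = 3 * ε := by field_simp; ring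
    rw [h3] at this
    rw [dist_comm]
    exact this


lemma exists_castaing (K : Ω → Set X) (hcl : ∀ ω, IsClosed (K ω))
    (hne : ∀ ω, (K ω).Nonempty)
    (hmeas : ∀ x : X, Measurable fun ω => infDist x (K ω)) :
    ∃ s : ℕ × ℕ → Ω → X, (∀ m, Measurable (s m)) ∧ (∀ m ω, s m ω ∈ K ω) ∧
      ∀ ω, K ω ⊆ closure (Set.range fun m => s m ω) := by
  classical
  set q := denseSeq X with hq
  have hex : ∀ (j : ℕ) (ω : Ω), ∃ k, infDist (q k) (K ω) < (1/2:ℝ) ^ j :=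
    fun j ω => dense_approx (K ω) (hne ω) (by positivity)
  have hstart : ∀ m j : ℕ, ∃ f₀ : Ω → ℕ, Measurable f₀ ∧
      (∀ ω, infDist (q (f₀ ω)) (K ω) < (1/2:ℝ) ^ j) ∧
      ∀ ω, infDist (q m) (K ω) < (1/2:ℝ) ^ j → f₀ ω = m := by
    intro m j
    refine ⟨fun ω => if infDist (q m) (K ω) < (1/2:ℝ) ^ j then m else Nat.find (hex j ω),
      ?_, ?_, ?_⟩
    · refine Measurable.ite ((hmeas (q m)) measurableSet_Iio) measurable_const ?_
      exact measurable_find _ (fun k => (hmeas (q k)) measurableSet_Iio)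
    · intro ω; by_cases h : infDist (q m) (K ω) < (1/2:ℝ) ^ j
      · dsimp only; rw [if_pos h]; exact h
      · dsimp only; rw [if_neg h]; exact Nat.find_spec (hex j ω)
    · intro ω h; dsimp only; rw [if_pos h]
  choose f₀ hf₀m hf₀lt hf₀eq using hstart
  have hsel : ∀ m j : ℕ, ∃ s : Ω → X, Measurable s ∧
      ∀ ω, s ω ∈ K ω ∧ dist (s ω) (q (f₀ m j ω)) ≤ 3 * (1/2:ℝ) ^ j :=
    fun m j => exists_selection_close K hcl hne hmeas (hf₀m m j) (by positivity) (hf₀lt m j)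
  choose s hsm hsp using hsel
  refine ⟨fun p => s p.1 p.2, fun p => hsm p.1 p.2, fun p ω => (hsp p.1 p.2 ω).1, ?_⟩
  intro ω y hy
  rw [Metric.mem_closure_iff]
  intro ε hε
  obtain ⟨j, hj⟩ := exists_pow_lt_of_lt_one (show (0:ℝ) < ε/5 by linarith)
    (by norm_num : (1/2:ℝ) < 1)
  obtain ⟨m, hm⟩ := (denseRange_denseSeq X).exists_dist_lt y
    (show (0:ℝ) < (1/2:ℝ)^j by positivity)
  have hgood : infDist (q m) (K ω) < (1/2:ℝ) ^ j :=
    lt_of_le_of_lt (by simpa [dist_comm] using infDist_le_dist_of_mem hy) hm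
  have heq := hf₀eq m j ω hgood
  refine ⟨s m j ω, ⟨(m, j), rfl⟩, ?_⟩
  have h2 := (hsp m j ω).2
  rw [heq] at h2
  have hp : (0:ℝ) < (1/2:ℝ)^j := by positivity
  calc dist y (s m j ω) ≤ dist y (q m) + dist (q m) (s m j ω) := dist_triangle _ _ _
    _ ≤ (1/2:ℝ)^j + 3 * (1/2:ℝ)^j := by rw [dist_comm (q m)]; exact add_le_add hm.le h2
    _ < ε := by linarith

end Selection

section Attractor

open TopologicalSpace Metric

variable {Ω₂ X : Type*} [MetricSpace X] [CompleteSpace X] [SecondCountableTopology X]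
  [MeasurableSpace X] [BorelSpace X] [MeasurableSpace Ω₂]
  {θ₂ : ℝ → Ω₂ → Ω₂} {Φ : ℝ → ℝ → Ω₂ → X → X} {𝒟 : Set (ℝ → Ω₂ → Set X)}
  {K : ℝ → Ω₂ → Set X}

/-- The pullback image of the family `K` at time `t`. -/
def pullSet (θ₂ : ℝ → Ω₂ → Ω₂) (Φ : ℝ → ℝ → Ω₂ → X → X) (K : ℝ → Ω₂ → Set X)
    (τ : ℝ) (ω : Ω₂) (t : ℝ) : Set X :=
  Φ t (τ + -t) (θ₂ (-t) ω) '' K (τ + -t) (θ₂ (-t) ω)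

/-- The candidate attractor: the Ω-limit set of `K`. -/
def attrSet (θ₂ : ℝ → Ω₂ → Ω₂) (Φ : ℝ → ℝ → Ω₂ → X → X) (K : ℝ → Ω₂ → Set X)
    (τ : ℝ) (ω : Ω₂) : Set X :=
  omegaLimit (fun t h => h + t) θ₂ Φ K τ ω

lemma gcomp (hθ₂ : IsGroupAction θ₂) (a b : ℝ) (ρ : Ω₂) :
    θ₂ b (θ₂ a ρ) = θ₂ (a + b) ρ := (hθ₂.2 a b ρ).symm

lemma gzero (hθ₂ : IsGroupAction θ₂) (ρ : Ω₂) : θ₂ 0 ρ = ρ := hθ₂.1 ρ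

lemma mem_attrSet_iff {τ : ℝ} {ω : Ω₂} {x : X} :
    x ∈ attrSet θ₂ Φ K τ ω ↔
      ∀ s : ℝ, 0 ≤ s → x ∈ closure (⋃ t ∈ Ici s, pullSet θ₂ Φ K τ ω t) := by
  simp only [attrSet, omegaLimit, pullSet, mem_iInter, mem_Ici]

lemma isClosed_attrSet (τ : ℝ) (ω : Ω₂) : IsClosed (attrSet θ₂ Φ K τ ω) :=
  isClosed_biInter fun _ _ => isClosed_closure

lemma mem_attrSet_of_seq {τ : ℝ} {ω : Ω₂} {x : X} (t : ℕ → ℝ) (z : ℕ → X)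
    (ht : Tendsto t atTop atTop) (hz : ∀ n, z n ∈ pullSet θ₂ Φ K τ ω (t n))
    (hconv : Tendsto z atTop (𝓝 x)) : x ∈ attrSet θ₂ Φ K τ ω := by
  rw [mem_attrSet_iff]
  intro s _
  refine mem_closure_of_tendsto hconv ?_
  filter_upwards [ht.eventually_ge_atTop s] with n hn
  exact mem_biUnion hn (hz n)

lemma exists_approx {τ : ℝ} {ω : Ω₂} {x : X} (hx : x ∈ attrSet θ₂ Φ K τ ω)
    {c : ℝ} (hc : 0 ≤ c) {δ : ℝ} (hδ : 0 < δ) :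
    ∃ t, c ≤ t ∧ ∃ z ∈ pullSet θ₂ Φ K τ ω t, dist x z < δ := by
  have := (mem_attrSet_iff.1 hx) c hc
  obtain ⟨b, hb, hdist⟩ := Metric.mem_closure_iff.1 this δ hδ
  simp only [mem_iUnion, mem_Ici, exists_prop] at hb
  obtain ⟨t, ht, hbt⟩ := hb
  exact ⟨t, ht, b, hbt, hdist⟩

/-- Splitting the pullback through an intermediate time, using absorption. -/
lemma eventually_pull_mem (hθ₂ : IsGroupAction θ₂)
    (hΦ : IsCocycle (fun t h => h + t) θ₂ Φ)
    (hKabs : IsAbsorbingSet (fun t h => h + t) θ₂ Φ 𝒟 K)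
    {B : ℝ → Ω₂ → Set X} (hB : B ∈ 𝒟) (τ : ℝ) (ω : Ω₂) {s : ℝ} (hs : 0 ≤ s) :
    ∃ T : ℝ, 0 < T ∧ ∀ t : ℝ, s + T ≤ t → ∀ x ∈ B (τ + -t) (θ₂ (-t) ω),
      Φ t (τ + -t) (θ₂ (-t) ω) x ∈ pullSet θ₂ Φ K τ ω s := by
  obtain ⟨T, hT0, hT⟩ := hKabs.2 (τ - s) (θ₂ (-s) ω) B hB
  refine ⟨T, hT0, fun t htT x hx => ?_⟩
  set u := t - s with hu
  have huT : T ≤ u := by simp [hu]; linarith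
  have hu0 : 0 ≤ u := le_trans hT0.le huT
  have hts : t = s + u := by ring
  -- rewrite the base point arguments
  have e1 : τ + -t = (τ - s) + -u := by ring
  have e2 : θ₂ (-t) ω = θ₂ (-u) (θ₂ (-s) ω) := by
    rw [gcomp hθ₂]; congr 1; ring
  have hxmem : x ∈ B ((τ - s) + -u) (θ₂ (-u) (θ₂ (-s) ω)) := by rw [← e1, ← e2]; exact hx
  have hw : Φ u ((τ - s) + -u) (θ₂ (-u) (θ₂ (-s) ω)) x ∈ K (τ - s) (θ₂ (-s) ω) := by
    apply hT u huT
    exact mem_image_of_mem _ hxmem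
  have hcoc := hΦ.cocycle s u hs hu0 ((τ - s) + -u) (θ₂ (-u) (θ₂ (-s) ω)) x
  have e3 : τ - s + -u + u = τ - s := by ring
  have e4 : θ₂ u (θ₂ (-u) (θ₂ (-s) ω)) = θ₂ (-s) ω := by
    rw [gcomp hθ₂]; simp [gzero hθ₂]
  rw [e3, e4] at hcoc
  have : Φ t (τ + -t) (θ₂ (-t) ω) x
      = Φ s (τ - s) (θ₂ (-s) ω) (Φ u ((τ - s) + -u) (θ₂ (-u) (θ₂ (-s) ω)) x) := by
    rw [e1, e2, ← hcoc, ← hts]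
  rw [this]
  have e5 : τ - s = τ + -s := by ring
  refine ⟨Φ u ((τ - s) + -u) (θ₂ (-u) (θ₂ (-s) ω)) x, ?_, ?_⟩
  · rw [← e5]; exact hw
  · rw [← e5]

/-- Limit points of pullback sequences of any `B ∈ 𝒟` lie in the Ω-limit set of `K`. -/
lemma key_limit (hθ₂ : IsGroupAction θ₂) (hΦ : IsCocycle (fun t h => h + t) θ₂ Φ)
    (hac : AsymptoticallyCompact (fun t h => h + t) θ₂ Φ 𝒟)
    (hKabs : IsAbsorbingSet (fun t h => h + t) θ₂ Φ 𝒟 K)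
    {B : ℝ → Ω₂ → Set X} (hB : B ∈ 𝒟) (τ : ℝ) (ω : Ω₂) (t : ℕ → ℝ) (x : ℕ → X)
    (ht : Tendsto t atTop atTop)
    (hx : ∀ n, x n ∈ B (τ + -t n) (θ₂ (-t n) ω)) :
    ∃ (φ : ℕ → ℕ) (y : X), StrictMono φ ∧ y ∈ attrSet θ₂ Φ K τ ω ∧
      Tendsto (fun n => Φ (t (φ n)) (τ + -t (φ n)) (θ₂ (-t (φ n)) ω) (x (φ n)))
        atTop (𝓝 y) := by
  obtain ⟨φ, y, hφ, hty⟩ := hac τ ω B hB t x ht hx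
  refine ⟨φ, y, hφ, ?_, hty⟩
  rw [mem_attrSet_iff]
  intro s hs
  obtain ⟨T, hT0, hT⟩ := eventually_pull_mem hθ₂ hΦ hKabs hB τ ω hs
  refine mem_closure_of_tendsto hty ?_
  have htφ : Tendsto (fun n => t (φ n)) atTop atTop := ht.comp hφ.tendsto_atTop
  filter_upwards [htφ.eventually_ge_atTop (s + T)] with n hn
  exact mem_biUnion (le_refl s) (hT (t (φ n)) hn (x (φ n)) (hx (φ n)))

lemma attrSet_nonempty (hθ₂ : IsGroupAction θ₂) (hΦ : IsCocycle (fun t h => h + t) θ₂ Φ)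
    (h𝒟ne : FamiliesOfNonemptySets 𝒟)
    (hac : AsymptoticallyCompact (fun t h => h + t) θ₂ Φ 𝒟)
    (hKabs : IsAbsorbingSet (fun t h => h + t) θ₂ Φ 𝒟 K) (τ : ℝ) (ω : Ω₂) :
    (attrSet θ₂ Φ K τ ω).Nonempty := by
  have hx : ∀ n : ℕ, ∃ z, z ∈ K (τ + -(n : ℝ)) (θ₂ (-(n : ℝ)) ω) :=
    fun n => h𝒟ne K hKabs.1 _ _
  choose x hxm using hx
  obtain ⟨φ, y, _, hy, _⟩ := key_limit hθ₂ hΦ hac hKabs hKabs.1 τ ω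
    (fun n => (n : ℝ)) x tendsto_natCast_atTop_atTop hxm
  exact ⟨y, hy⟩

/-- A small helper: convergence from `dist x (z n) < 1 / (n + 1)`. -/
lemma tendsto_of_dist_lt {x : X} {z : ℕ → X}
    (h : ∀ n : ℕ, dist x (z n) < 1 / ((n : ℝ) + 1)) : Tendsto z atTop (𝓝 x) := by
  rw [tendsto_iff_dist_tendsto_zero]
  refine squeeze_zero (fun n => dist_nonneg) (fun n => ?_)
    tendsto_one_div_add_atTop_nhds_zero_nat
  rw [dist_comm]; exact (h n).le

/-- The Ω-limit set of `K` pullback-attracts every `B ∈ 𝒟`. -/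
lemma attrSet_attracts (hθ₂ : IsGroupAction θ₂) (hΦ : IsCocycle (fun t h => h + t) θ₂ Φ)
    (hac : AsymptoticallyCompact (fun t h => h + t) θ₂ Φ 𝒟)
    (hKabs : IsAbsorbingSet (fun t h => h + t) θ₂ Φ 𝒟 K)
    {B : ℝ → Ω₂ → Set X} (hB : B ∈ 𝒟) :
    Attracts (fun t h => h + t) θ₂ Φ B (attrSet θ₂ Φ K) := by
  intro τ ω
  rw [ENNReal.tendsto_nhds_zero]
  intro ε hε
  by_contra hcon
  rw [Filter.not_eventually] at hcon
  have hfr : ∀ n : ℕ, ∃ t : ℝ, (n : ℝ) ≤ t ∧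
      ¬ hausSemidist (Φ t (τ + -t) (θ₂ (-t) ω) '' B (τ + -t) (θ₂ (-t) ω))
        (attrSet θ₂ Φ K τ ω) ≤ ε := by
    intro n
    obtain ⟨t, ht, hmem⟩ := (Filter.frequently_atTop.1 hcon) (n : ℝ)
    exact ⟨t, ht, hmem⟩
  choose t htge htgt using hfr
  have hz : ∀ n : ℕ, ∃ x ∈ B (τ + -t n) (θ₂ (-t n) ω),
      ε < EMetric.infEdist (Φ (t n) (τ + -t n) (θ₂ (-t n) ω) x) (attrSet θ₂ Φ K τ ω) := by
    intro n
    have := htgt n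
    rw [not_le] at this
    rw [hausSemidist] at this
    obtain ⟨zz, hzz⟩ := lt_iSup_iff.1 this
    obtain ⟨hzmem, hzgt⟩ := lt_iSup_iff.1 hzz
    obtain ⟨xx, hxx, rfl⟩ := hzmem
    exact ⟨xx, hxx, hzgt⟩
  choose x hxm hxgt using hz
  have ht' : Tendsto t atTop atTop :=
    tendsto_atTop_mono htge tendsto_natCast_atTop_atTop
  obtain ⟨φ, y, hφ, hy, hty⟩ := key_limit hθ₂ hΦ hac hKabs hB τ ω t x ht' hxm
  obtain ⟨N, hN⟩ := (EMetric.tendsto_atTop.1 hty) ε hε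
  have h1 := hxgt (φ N)
  have h2 : EMetric.infEdist (Φ (t (φ N)) (τ + -t (φ N)) (θ₂ (-t (φ N)) ω) (x (φ N)))
      (attrSet θ₂ Φ K τ ω) ≤ ε := by
    exact le_trans (EMetric.infEdist_le_edist_of_mem hy) (hN N le_rfl).le
  exact absurd h2 (not_le.2 h1)

lemma attrSet_isCompact (hθ₂ : IsGroupAction θ₂) (hΦ : IsCocycle (fun t h => h + t) θ₂ Φ)
    (hac : AsymptoticallyCompact (fun t h => h + t) θ₂ Φ 𝒟)
    (hKabs : IsAbsorbingSet (fun t h => h + t) θ₂ Φ 𝒟 K) (τ : ℝ) (ω : Ω₂) :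
    IsCompact (attrSet θ₂ Φ K τ ω) := by
  refine IsSeqCompact.isCompact ?_
  intro u hu
  have happ : ∀ n : ℕ, ∃ t, (n : ℝ) ≤ t ∧ ∃ z ∈ pullSet θ₂ Φ K τ ω t,
      dist (u n) z < 1 / ((n : ℝ) + 1) :=
    fun n => exists_approx (hu n) (Nat.cast_nonneg n) (by positivity)
  choose t htge z hzmem hzd using happ
  have hximg : ∀ n, ∃ x ∈ K (τ + -t n) (θ₂ (-t n) ω),
      Φ (t n) (τ + -t n) (θ₂ (-t n) ω) x = z n := fun n => hzmem n
  choose x hxm hxe using hximg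
  have ht' : Tendsto t atTop atTop := tendsto_atTop_mono htge tendsto_natCast_atTop_atTop
  obtain ⟨φ, y, hφ, hy, hty⟩ := key_limit hθ₂ hΦ hac hKabs hKabs.1 τ ω t x ht' hxm
  have hzconv : Tendsto (fun n => z (φ n)) atTop (𝓝 y) := by
    have : (fun n => z (φ n)) = fun n => Φ (t (φ n)) (τ + -t (φ n)) (θ₂ (-t (φ n)) ω) (x (φ n)) := by
      funext n; rw [hxe]
    rw [this]; exact hty
  refine ⟨y, hy, φ, hφ, ?_⟩
  rw [tendsto_iff_dist_tendsto_zero]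
  have hsq : ∀ n : ℕ, dist (u (φ n)) y ≤ 1 / ((φ n : ℝ) + 1) + dist (z (φ n)) y := by
    intro n
    calc dist (u (φ n)) y ≤ dist (u (φ n)) (z (φ n)) + dist (z (φ n)) y := dist_triangle _ _ _
      _ ≤ 1 / ((φ n : ℝ) + 1) + dist (z (φ n)) y := by
          have := hzd (φ n); linarith
  refine squeeze_zero (fun n => dist_nonneg) hsq ?_
  have h1 : Tendsto (fun n : ℕ => 1 / ((φ n : ℝ) + 1)) atTop (𝓝 0) :=
    tendsto_one_div_add_atTop_nhds_zero_nat.comp hφ.tendsto_atTop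
  have h2 : Tendsto (fun n => dist (z (φ n)) y) atTop (𝓝 0) :=
    tendsto_iff_dist_tendsto_zero.1 hzconv
  simpa using h1.add h2

lemma attrSet_subset_K (hKabs : IsAbsorbingSet (fun t h => h + t) θ₂ Φ 𝒟 K)
    (hKcl : ∀ (τ : ℝ) (ω : Ω₂), IsClosed (K τ ω)) (τ : ℝ) (ω : Ω₂) :
    attrSet θ₂ Φ K τ ω ⊆ K τ ω := by
  obtain ⟨T, hT0, hT⟩ := hKabs.2 τ ω K hKabs.1
  intro x hx
  have hxc := (mem_attrSet_iff.1 hx) T hT0.le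
  have hsub : (⋃ t ∈ Ici T, pullSet θ₂ Φ K τ ω t) ⊆ K τ ω := by
    refine iUnion₂_subset fun t ht => ?_
    exact hT t ht
  exact closure_minimal hsub (hKcl τ ω) hxc

/-- Invariance of the Ω-limit set of `K`. -/
lemma attrSet_invariant (hθ₂ : IsGroupAction θ₂) (hΦ : IsCocycle (fun t h => h + t) θ₂ Φ)
    (hac : AsymptoticallyCompact (fun t h => h + t) θ₂ Φ 𝒟)
    (hKabs : IsAbsorbingSet (fun t h => h + t) θ₂ Φ 𝒟 K) :
    Invariant (fun t h => h + t) θ₂ Φ (attrSet θ₂ Φ K) := by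
  intro r hr τ ω
  apply Subset.antisymm
  · -- forward inclusion
    rintro _ ⟨xx, hxA, rfl⟩
    have happ : ∀ n : ℕ, ∃ t, (n : ℝ) ≤ t ∧ ∃ z ∈ pullSet θ₂ Φ K τ ω t,
        dist xx z < 1 / ((n : ℝ) + 1) :=
      fun n => exists_approx hxA (Nat.cast_nonneg n) (by positivity)
    choose t htge z hzmem hzd using happ
    choose x hxm hxe using fun n => hzmem n
    have ht' : Tendsto t atTop atTop := tendsto_atTop_mono htge tendsto_natCast_atTop_atTop
    have hznew : ∀ n, Φ r τ ω (z n) ∈ pullSet θ₂ Φ K (τ + r) (θ₂ r ω) (r + t n) := by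
      intro n
      have ht0 : (0:ℝ) ≤ t n := le_trans (Nat.cast_nonneg n) (htge n)
      have hcoc := hΦ.cocycle r (t n) hr ht0 (τ + -t n) (θ₂ (-t n) ω) (x n)
      have e1 : τ + -t n + t n = τ := by ring
      have e2 : θ₂ (t n) (θ₂ (-t n) ω) = ω := by
        rw [gcomp hθ₂]; simp [gzero hθ₂]
      rw [e1, e2, hxe n] at hcoc
      refine ⟨x n, ?_, ?_⟩
      · have e3 : (τ + r) + -(r + t n) = τ + -t n := by ring
        have e4 : θ₂ (-(r + t n)) (θ₂ r ω) = θ₂ (-t n) ω := by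
          rw [gcomp hθ₂]; congr 1; ring
        rw [e3, e4]; exact hxm n
      · have e3 : (τ + r) + -(r + t n) = τ + -t n := by ring
        have e4 : θ₂ (-(r + t n)) (θ₂ r ω) = θ₂ (-t n) ω := by
          rw [gcomp hθ₂]; congr 1; ring
        rw [e3, e4, ← hcoc]
    refine mem_attrSet_of_seq (fun n => r + t n) (fun n => Φ r τ ω (z n)) ?_ hznew ?_
    · exact tendsto_atTop_add_const_left _ r ht'
    · exact ((hΦ.continuous r hr τ ω).tendsto xx).comp (tendsto_of_dist_lt hzd)
  · -- backward inclusion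
    intro y hy
    have happ : ∀ n : ℕ, ∃ s, |r| + (n : ℝ) ≤ s ∧
        ∃ z ∈ pullSet θ₂ Φ K (τ + r) (θ₂ r ω) s, dist y z < 1 / ((n : ℝ) + 1) :=
      fun n => exists_approx hy (by positivity) (by positivity)
    choose s hsge z hzmem hzd using happ
    choose x hxm hxe using fun n => hzmem n
    set u : ℕ → ℝ := fun n => s n - r with hu
    have hun : ∀ n : ℕ, (n : ℝ) ≤ u n := by
      intro n
      have := hsge n
      have := abs_nonneg r
      have := le_abs_self r
      simp only [hu]; linarith
    have hu' : Tendsto u atTop atTop := tendsto_atTop_mono hun tendsto_natCast_atTop_atTop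
    have hxm' : ∀ n, x n ∈ K (τ + -u n) (θ₂ (-u n) ω) := by
      intro n
      have e1 : (τ + r) + -s n = τ + -u n := by simp only [hu]; ring
      have e2 : θ₂ (-s n) (θ₂ r ω) = θ₂ (-u n) ω := by
        rw [gcomp hθ₂]; congr 1; simp only [hu]; ring
      rw [← e1, ← e2]; exact hxm n
    obtain ⟨φ, w, hφ, hw, htw⟩ := key_limit hθ₂ hΦ hac hKabs hKabs.1 τ ω u x hu' hxm'
    -- z (φ n) = Φ r τ ω (pullback point)
    have hzeq : ∀ n, z n = Φ r τ ω (Φ (u n) (τ + -u n) (θ₂ (-u n) ω) (x n)) := by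
      intro n
      have hun0 : (0:ℝ) ≤ u n := le_trans (Nat.cast_nonneg n) (hun n)
      have hcoc := hΦ.cocycle r (u n) hr hun0 (τ + -u n) (θ₂ (-u n) ω) (x n)
      have e1 : τ + -u n + u n = τ := by ring
      have e2 : θ₂ (u n) (θ₂ (-u n) ω) = ω := by rw [gcomp hθ₂]; simp [gzero hθ₂]
      rw [e1, e2] at hcoc
      have e3 : r + u n = s n := by simp only [hu]; ring
      rw [e3] at hcoc
      rw [← hcoc, ← hxe n]
      congr 1
      · simp only [hu]; ring
      · rw [gcomp hθ₂]; congr 1; simp only [hu]; ring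
    have hconv1 : Tendsto (fun n => z (φ n)) atTop (𝓝 (Φ r τ ω w)) := by
      have : (fun n => z (φ n)) = fun n => Φ r τ ω
          (Φ (u (φ n)) (τ + -u (φ n)) (θ₂ (-u (φ n)) ω) (x (φ n))) := by
        funext n; rw [hzeq]
      rw [this]
      exact ((hΦ.continuous r hr τ ω).tendsto w).comp htw
    have hconv2 : Tendsto (fun n => z (φ n)) atTop (𝓝 y) :=
      (tendsto_of_dist_lt hzd).comp hφ.tendsto_atTop
    have : y = Φ r τ ω w := tendsto_nhds_unique hconv2 hconv1
    exact ⟨w, hw, this.symm⟩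

lemma attrSet_mem_D (hθ₂ : IsGroupAction θ₂) (hΦ : IsCocycle (fun t h => h + t) θ₂ Φ)
    (h𝒟ne : FamiliesOfNonemptySets 𝒟) (h𝒟nc : NeighborhoodClosed 𝒟)
    (hac : AsymptoticallyCompact (fun t h => h + t) θ₂ Φ 𝒟)
    (hKabs : IsAbsorbingSet (fun t h => h + t) θ₂ Φ 𝒟 K)
    (hKcl : ∀ (τ : ℝ) (ω : Ω₂), IsClosed (K τ ω)) :
    attrSet θ₂ Φ K ∈ 𝒟 := by
  obtain ⟨ε, hε, hcl⟩ := h𝒟nc K hKabs.1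
  refine hcl _ fun τ ω => ⟨attrSet_nonempty hθ₂ hΦ h𝒟ne hac hKabs τ ω, ?_⟩
  exact (attrSet_subset_K hKabs hKcl τ ω).trans (Metric.self_subset_thickening hε _)

lemma hausSemidist_eq_zero_subset {C B : Set X} (hB : IsClosed B)
    (h : hausSemidist C B = 0) : C ⊆ B := by
  intro x hx
  have h1 : EMetric.infEdist x B ≤ hausSemidist C B := by
    rw [hausSemidist]
    exact le_iSup₂ (f := fun y (_ : y ∈ C) => EMetric.infEdist y B) x hx
  rw [h, le_zero_iff] at h1
  rw [← hB.closure_eq]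
  exact EMetric.mem_closure_iff_infEdist_zero.2 h1

/-- Uniqueness of pullback attractors. -/
lemma attractor_subset (hθ₂ : IsGroupAction θ₂) {P : Measure Ω₂}
    {A A' : ℝ → Ω₂ → Set X}
    (hA : IsPullbackAttractor (fun t h => h + t) θ₂ Φ P 𝒟 A)
    (hA' : IsPullbackAttractor (fun t h => h + t) θ₂ Φ P 𝒟 A')
    (τ : ℝ) (ω : Ω₂) : A' τ ω ⊆ A τ ω := by
  have h := hA.attracts A' hA'.mem τ ω
  have hconst : ∀ t : ℝ, 0 ≤ t →
      hausSemidist (Φ t (τ + -t) (θ₂ (-t) ω) '' A' (τ + -t) (θ₂ (-t) ω)) (A τ ω)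
        = hausSemidist (A' τ ω) (A τ ω) := by
    intro t ht
    have hinv := hA'.invariant t ht (τ + -t) (θ₂ (-t) ω)
    have e1 : τ + -t + t = τ := by ring
    have e2 : θ₂ t (θ₂ (-t) ω) = ω := by rw [gcomp hθ₂]; simp [gzero hθ₂]
    rw [e1, e2] at hinv
    rw [hinv]
  have heq : (fun t : ℝ => hausSemidist (Φ t (τ + -t) (θ₂ (-t) ω) ''
      A' (τ + -t) (θ₂ (-t) ω)) (A τ ω)) =ᶠ[atTop]
      (fun _ => hausSemidist (A' τ ω) (A τ ω)) := by
    filter_upwards [eventually_ge_atTop (0:ℝ)] with t ht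
    exact hconst t ht
  have h0 : hausSemidist (A' τ ω) (A τ ω) = 0 :=
    tendsto_nhds_unique (Tendsto.congr' heq.symm tendsto_const_nhds) h
  exact hausSemidist_eq_zero_subset (hA.compact τ ω).isClosed h0

lemma attractor_unique (hθ₂ : IsGroupAction θ₂) {P : Measure Ω₂}
    {A A' : ℝ → Ω₂ → Set X}
    (hA : IsPullbackAttractor (fun t h => h + t) θ₂ Φ P 𝒟 A)
    (hA' : IsPullbackAttractor (fun t h => h + t) θ₂ Φ P 𝒟 A') : A' = A := by
  funext τ ω
  exact Subset.antisymm (attractor_subset hθ₂ hA hA' τ ω) (attractor_subset hθ₂ hA' hA τ ω)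

section Meas

variable {P : Measure Ω₂}

/-- Null-measurability of `ω ↦ infDist x (pullSet … t)` for a fixed time `t`. -/
lemma pullSet_infDist_nullMeasurable [Nonempty X]
    (hθ₂ : IsGroupAction θ₂) (hθ₂pres : ∀ t : ℝ, MeasurePreserving (θ₂ t) P P)
    (hθ₂meas : Measurable fun p : ℝ × Ω₂ => θ₂ p.1 p.2)
    (hΦ : IsCocycle (fun t h => h + t) θ₂ Φ)
    (hKcl : ∀ (σ : ℝ) (ω : Ω₂), IsClosed (K σ ω))
    (hKne : ∀ (σ : ℝ) (ω : Ω₂), (K σ ω).Nonempty)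
    (hKm : ∀ (σ : ℝ) (x : X), NullMeasurable (fun ω => Metric.infDist x (K σ ω)) P)
    (τ : ℝ) (x : X) {t : ℝ} (ht : 0 ≤ t) :
    NullMeasurable (fun ω => Metric.infDist x (pullSet θ₂ Φ K τ ω t)) P := by
  set τ' := τ + -t with hτ'
  -- Castaing representation of `K τ'` w.r.t. the completion σ-algebra
  obtain ⟨sel, hselm, hselK, hseld⟩ :=
    exists_castaing (Ω := NullMeasurableSpace Ω₂ P) (X := X) (fun ω => K τ' ω)
      (fun ω => hKcl τ' ω) (fun ω => hKne τ' ω) (fun y => (hKm τ' y).measurable')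
  -- the function at a fixed base point, as a countable infimum
  have hrepr : ∀ ω' : Ω₂, EMetric.infEdist x (Φ t τ' ω' '' K τ' ω')
      = ⨅ m : ℕ × ℕ, edist x (Φ t τ' ω' (sel m ω')) := by
    intro ω'
    have hKeq : K τ' ω' = closure (Set.range fun m => sel m ω') := by
      refine Subset.antisymm (hseld ω') (closure_minimal ?_ (hKcl τ' ω'))
      rintro _ ⟨m, rfl⟩; exact hselK m ω'
    have hcont := hΦ.continuous t ht τ' ω'
    have hSsubK : (Set.range fun m => sel m ω') ⊆ K τ' ω' := by
      rintro _ ⟨m, rfl⟩; exact hselK m ω'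
    have h1 : EMetric.infEdist x (Φ t τ' ω' '' K τ' ω')
        = EMetric.infEdist x (Φ t τ' ω' '' (Set.range fun m => sel m ω')) := by
      apply le_antisymm
      · exact EMetric.infEdist_anti (image_mono hSsubK)
      · unfold EMetric.infEdist; rw [← EMetric.infEdist_closure
          (s := Φ t τ' ω' '' (Set.range fun m => sel m ω'))]
        refine EMetric.infEdist_anti ?_
        rw [hKeq]
        exact image_closure_subset_closure_image hcont
    rw [h1, ← Set.range_comp]
    unfold EMetric.infEdist; rw [← EMetric.infEdist_closure, EMetric.infEdist_closure]
    simp only [EMetric.infEdist, Metric.infEDist, iInf_range, Function.comp]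
  -- measurability of each term w.r.t. the completion σ-algebra
  have hGmeas : Measurable fun p : Ω₂ × X => Φ t τ' p.1 p.2 :=
    (hΦ.measurable τ').comp ((measurable_const (a := (⟨t, ht⟩ : {t : ℝ // 0 ≤ t}))).prodMk
      measurable_id)
  have hterm : ∀ m : ℕ × ℕ, @Measurable (NullMeasurableSpace Ω₂ P) ℝ≥0∞ _ _
      (fun ω' => edist x (Φ t τ' ω' (sel m ω'))) := by
    intro m
    have hid0 : NullMeasurable (id : Ω₂ → Ω₂) P := measurable_id.nullMeasurable
    have hid : @Measurable (NullMeasurableSpace Ω₂ P) Ω₂ _ _ id := hid0.measurable'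
    have hpair : @Measurable (NullMeasurableSpace Ω₂ P) (Ω₂ × X) _ _
        (fun ω' => (ω', sel m ω')) := hid.prodMk (hselm m)
    exact (measurable_const.edist (hGmeas.comp hpair))
  have hFmeas : @Measurable (NullMeasurableSpace Ω₂ P) ℝ _ _
      (fun ω' => Metric.infDist x (Φ t τ' ω' '' K τ' ω')) := by
    have h1 : @Measurable (NullMeasurableSpace Ω₂ P) ℝ≥0∞ _ _
        (fun ω' => ⨅ m : ℕ × ℕ, edist x (Φ t τ' ω' (sel m ω'))) :=
      Measurable.iInf hterm
    have h2 : (fun ω' : NullMeasurableSpace Ω₂ P => Metric.infDist x (Φ t τ' ω' '' K τ' ω'))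
        = fun ω' => (⨅ m : ℕ × ℕ, edist x (Φ t τ' ω' (sel m ω'))).toReal := by
      funext ω'; rw [Metric.infDist]; exact congrArg ENNReal.toReal (hrepr ω')
    rw [h2]
    exact ENNReal.measurable_toReal.comp h1
  -- compose with the measure-preserving map `θ₂ (-t)`
  have hθm : Measurable (θ₂ (-t)) := hθ₂meas.comp (measurable_const.prodMk measurable_id)
  have hFnm : NullMeasurable (fun ω' : Ω₂ => Metric.infDist x (Φ t τ' ω' '' K τ' ω')) P :=
    hFmeas
  intro u hu
  exact (hFnm hu).preimage (hθ₂pres (-t)).quasiMeasurePreserving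

/-- Null-measurability of `ω ↦ infDist x (attrSet …)`. -/
lemma attrSet_infDist_nullMeasurable [Nonempty X]
    (hθ₂ : IsGroupAction θ₂) (hθ₂pres : ∀ t : ℝ, MeasurePreserving (θ₂ t) P P)
    (hθ₂meas : Measurable fun p : ℝ × Ω₂ => θ₂ p.1 p.2)
    (hΦ : IsCocycle (fun t h => h + t) θ₂ Φ)
    (h𝒟ne : FamiliesOfNonemptySets 𝒟)
    (hac : AsymptoticallyCompact (fun t h => h + t) θ₂ Φ 𝒟)
    (hKabs : IsAbsorbingSet (fun t h => h + t) θ₂ Φ 𝒟 K)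
    (hKcl : ∀ (σ : ℝ) (ω : Ω₂), IsClosed (K σ ω))
    (hKne : ∀ (σ : ℝ) (ω : Ω₂), (K σ ω).Nonempty)
    (hKm : ∀ (σ : ℝ) (x : X), NullMeasurable (fun ω => Metric.infDist x (K σ ω)) P)
    (τ : ℝ) (x : X) :
    NullMeasurable (fun ω => Metric.infDist x (attrSet θ₂ Φ K τ ω)) P := by
  -- pointwise convergence of the `pullSet` distances to the attractor distance
  have hptwise : ∀ ω : Ω₂, Tendsto (fun n : ℕ => Metric.infDist x (pullSet θ₂ Φ K τ ω (n : ℝ)))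
      atTop (𝓝 (Metric.infDist x (attrSet θ₂ Φ K τ ω))) := by
    intro ω
    set a := EMetric.infEdist x (attrSet θ₂ Φ K τ ω) with ha
    have hane : a ≠ ⊤ :=
      Metric.infEdist_ne_top (attrSet_nonempty hθ₂ hΦ h𝒟ne hac hKabs τ ω)
    have hsub : ∀ n : ℕ, attrSet θ₂ Φ K τ ω ⊆ pullSet θ₂ Φ K τ ω (n : ℝ) := by
      intro n
      have hinv := attrSet_invariant hθ₂ hΦ hac hKabs (n : ℝ) (Nat.cast_nonneg n)
        (τ + -(n:ℝ)) (θ₂ (-(n:ℝ)) ω)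
      have e1 : τ + -(n:ℝ) + (n:ℝ) = τ := by ring
      have e2 : θ₂ (n:ℝ) (θ₂ (-(n:ℝ)) ω) = ω := by rw [gcomp hθ₂]; simp [gzero hθ₂]
      dsimp only at hinv
      rw [e1, e2] at hinv
      rw [← hinv]
      exact image_mono (attrSet_subset_K hKabs hKcl _ _)
    have hble : ∀ n : ℕ, EMetric.infEdist x (pullSet θ₂ Φ K τ ω (n : ℝ)) ≤ a :=
      fun n => EMetric.infEdist_anti (hsub n)
    have hattr := attrSet_attracts hθ₂ hΦ hac hKabs hKabs.1 (K := K) τ ω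
    have hnat : Tendsto (fun n : ℕ => hausSemidist (pullSet θ₂ Φ K τ ω (n : ℝ))
        (attrSet θ₂ Φ K τ ω)) atTop (𝓝 0) := hattr.comp tendsto_natCast_atTop_atTop
    have hale : ∀ n : ℕ, a ≤ EMetric.infEdist x (pullSet θ₂ Φ K τ ω (n : ℝ))
        + hausSemidist (pullSet θ₂ Φ K τ ω (n : ℝ)) (attrSet θ₂ Φ K τ ω) := by
      intro n
      set b := EMetric.infEdist x (pullSet θ₂ Φ K τ ω (n : ℝ))
      set h := hausSemidist (pullSet θ₂ Φ K τ ω (n : ℝ)) (attrSet θ₂ Φ K τ ω)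
      refine ENNReal.le_of_forall_pos_le_add fun ε hε hbh => ?_
      have hpullne : (pullSet θ₂ Φ K τ ω (n : ℝ)).Nonempty :=
        (hKne _ _).image _
      have hbne : b ≠ ⊤ := Metric.infEdist_ne_top hpullne
      have hblt : b < b + ε := by
        refine ENNReal.lt_add_right hbne ?_
        simpa using hε.ne'
      obtain ⟨y, hymem, hy⟩ := EMetric.infEdist_lt_iff.1 hblt
      have h1 : a ≤ edist x y + EMetric.infEdist y (attrSet θ₂ Φ K τ ω) :=
        EMetric.infEdist_le_edist_add_infEdist
      have h2 : EMetric.infEdist y (attrSet θ₂ Φ K τ ω) ≤ h :=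
        le_iSup₂ (f := fun z (_ : z ∈ pullSet θ₂ Φ K τ ω (n:ℝ)) =>
          EMetric.infEdist z (attrSet θ₂ Φ K τ ω)) y hymem
      calc a ≤ edist x y + EMetric.infEdist y (attrSet θ₂ Φ K τ ω) := h1
        _ ≤ (b + ε) + h := add_le_add hy.le h2
        _ = b + h + ε := by ring
    have hetends : Tendsto (fun n : ℕ => EMetric.infEdist x (pullSet θ₂ Φ K τ ω (n : ℝ)))
        atTop (𝓝 a) := by
      rw [ENNReal.tendsto_nhds hane]
      intro ε hε
      filter_upwards [ENNReal.tendsto_nhds_zero.1 hnat ε hε] with n hn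
      constructor
      · rw [tsub_le_iff_right]
        calc a ≤ EMetric.infEdist x (pullSet θ₂ Φ K τ ω (n : ℝ))
              + hausSemidist (pullSet θ₂ Φ K τ ω (n : ℝ)) (attrSet θ₂ Φ K τ ω) := hale n
          _ ≤ EMetric.infEdist x (pullSet θ₂ Φ K τ ω (n : ℝ)) + ε := add_le_add le_rfl hn
      · exact le_trans (hble n) le_self_add
    have := (ENNReal.tendsto_toReal hane).comp hetends
    simpa [Metric.infDist, EMetric.infEdist, ha, Function.comp_def] using this
  -- conclude by taking a pointwise limit of null-measurable functions
  have hn : ∀ n : ℕ, @Measurable (NullMeasurableSpace Ω₂ P) ℝ _ _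
      (fun ω => Metric.infDist x (pullSet θ₂ Φ K τ ω (n : ℝ))) :=
    fun n => pullSet_infDist_nullMeasurable hθ₂ hθ₂pres hθ₂meas hΦ hKcl hKne hKm τ x
      (Nat.cast_nonneg n)
  have := @measurable_of_tendsto_metrizable (NullMeasurableSpace Ω₂ P) ℝ _ _ _ _ _
    (fun (n : ℕ) (ω : NullMeasurableSpace Ω₂ P) => Metric.infDist x (pullSet θ₂ Φ K τ ω (n : ℝ)))
    (fun ω : NullMeasurableSpace Ω₂ P => Metric.infDist x (attrSet θ₂ Φ K τ ω))
    hn (tendsto_pi_nhds.2 hptwise)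
  exact this

end Meas

section Quasi

/-- Every `𝒟`-complete quasi-solution passes through any family that pullback-attracts
all members of `𝒟` and has closed fibers. -/
lemma quasiSolution_mem (hθ₂ : IsGroupAction θ₂) {A : ℝ → Ω₂ → Set X}
    (hAcl : ∀ (τ : ℝ) (ω : Ω₂), IsClosed (A τ ω))
    (hattr : ∀ B ∈ 𝒟, Attracts (fun t h => h + t) θ₂ Φ B A)
    {ξ : ℝ → Ω₂ → X} (hξ : IsQuasiSolution θ₂ Φ ξ)
    {D : ℝ → Ω₂ → Set X} (hD : D ∈ 𝒟) (hξD : ∀ (t : ℝ) (ω' : Ω₂), ξ t ω' ∈ D t ω')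
    (τ : ℝ) (ω : Ω₂) : ξ τ ω ∈ A τ ω := by
  have hmem : ∀ t : ℝ, 0 ≤ t →
      ξ τ ω ∈ Φ t (τ + -t) (θ₂ (-t) ω) '' D (τ + -t) (θ₂ (-t) ω) := by
    intro t ht
    have h := hξ t (τ + -t) ht (θ₂ (-t) ω)
    have e1 : t + (τ + -t) = τ := by ring
    have e2 : θ₂ t (θ₂ (-t) ω) = ω := by rw [gcomp hθ₂]; simp [gzero hθ₂]
    rw [e1, e2] at h
    exact ⟨ξ (τ + -t) (θ₂ (-t) ω), hξD _ _, h⟩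
  have hle : ∀ t : ℝ, 0 ≤ t → EMetric.infEdist (ξ τ ω) (A τ ω) ≤
      hausSemidist (Φ t (τ + -t) (θ₂ (-t) ω) '' D (τ + -t) (θ₂ (-t) ω)) (A τ ω) := by
    intro t ht
    exact le_iSup₂ (f := fun z (_ : z ∈ Φ t (τ + -t) (θ₂ (-t) ω) '' D (τ + -t) (θ₂ (-t) ω)) =>
      EMetric.infEdist z (A τ ω)) (ξ τ ω) (hmem t ht)
  have h0 : EMetric.infEdist (ξ τ ω) (A τ ω) ≤ 0 := by
    refine ge_of_tendsto (hattr D hD τ ω) ?_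
    filter_upwards [eventually_ge_atTop (0:ℝ)] with t ht
    exact hle t ht
  rw [← (hAcl τ ω).closure_eq]
  exact EMetric.mem_closure_iff_infEdist_zero.2 (le_antisymm h0 zero_le)

/-- A complete trace through a point of an invariant family, along one fiber of the
skew-product flow. -/
lemma exists_complete_trace (hθ₂ : IsGroupAction θ₂)
    (hΦ : IsCocycle (fun t h => h + t) θ₂ Φ) {A : ℝ → Ω₂ → Set X}
    (hinv : Invariant (fun t h => h + t) θ₂ Φ A) (σ : ℝ) (ρ : Ω₂) (a₀ : X)
    (h₀ : a₀ ∈ A σ ρ) :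
    ∃ v : ℝ → X, v 0 = a₀ ∧ (∀ r : ℝ, v r ∈ A (σ + r) (θ₂ r ρ)) ∧
      ∀ t r : ℝ, 0 ≤ t → Φ t (σ + r) (θ₂ r ρ) (v r) = v (t + r) := by
  classical
  -- backward chain of preimages at integer times
  have step : ∀ (k : ℕ) (y : {y : X // y ∈ A (σ - (k:ℝ)) (θ₂ (-(k:ℝ)) ρ)}),
      ∃ z : {z : X // z ∈ A (σ - ((k+1:ℕ):ℝ)) (θ₂ (-((k+1:ℕ):ℝ)) ρ)},
        Φ 1 (σ - ((k+1:ℕ):ℝ)) (θ₂ (-((k+1:ℕ):ℝ)) ρ) z.1 = y.1 := by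
    intro k y
    have hinv1 := hinv 1 zero_le_one (σ - ((k+1:ℕ):ℝ)) (θ₂ (-((k+1:ℕ):ℝ)) ρ)
    dsimp only at hinv1
    have e1 : σ - ((k+1:ℕ):ℝ) + 1 = σ - (k:ℝ) := by push_cast; ring
    have e2 : θ₂ 1 (θ₂ (-((k+1:ℕ):ℝ)) ρ) = θ₂ (-(k:ℝ)) ρ := by
      rw [gcomp hθ₂]; congr 1; push_cast; ring
    rw [e1, e2] at hinv1
    have hy : y.1 ∈ Φ 1 (σ - ((k+1:ℕ):ℝ)) (θ₂ (-((k+1:ℕ):ℝ)) ρ) ''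
        A (σ - ((k+1:ℕ):ℝ)) (θ₂ (-((k+1:ℕ):ℝ)) ρ) := by
      rw [hinv1]; exact y.2
    obtain ⟨z, hz, hze⟩ := hy
    exact ⟨⟨z, hz⟩, hze⟩
  choose F hF using step
  have hbase : a₀ ∈ A (σ - ((0:ℕ):ℝ)) (θ₂ (-((0:ℕ):ℝ)) ρ) := by
    simpa [gzero hθ₂] using h₀
  let chain : (k : ℕ) → {y : X // y ∈ A (σ - (k:ℝ)) (θ₂ (-(k:ℝ)) ρ)} :=
    fun k => Nat.rec ⟨a₀, hbase⟩ (fun k ih => F k ih) k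
  set g : ℕ → X := fun k => (chain k).1 with hg
  have hgmem : ∀ k : ℕ, g k ∈ A (σ - (k:ℝ)) (θ₂ (-(k:ℝ)) ρ) := fun k => (chain k).2
  have hlink : ∀ k : ℕ, Φ 1 (σ - ((k+1:ℕ):ℝ)) (θ₂ (-((k+1:ℕ):ℝ)) ρ) (g (k+1)) = g k :=
    fun k => hF k (chain k)
  -- iterated link
  have hiter : ∀ j k : ℕ, Φ ((j:ℕ):ℝ) (σ - ((k+j:ℕ):ℝ)) (θ₂ (-((k+j:ℕ):ℝ)) ρ) (g (k+j)) = g k := by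
    intro j
    induction j with
    | zero =>
      intro k
      simp only [Nat.add_zero, Nat.cast_zero]
      exact hΦ.map_zero _ _ _
    | succ j ih =>
      intro k
      have hcoc := hΦ.cocycle ((j:ℕ):ℝ) 1 (Nat.cast_nonneg j) zero_le_one
        (σ - ((k+j+1:ℕ):ℝ)) (θ₂ (-((k+j+1:ℕ):ℝ)) ρ) (g (k+j+1))
      have e1 : σ - ((k+j+1:ℕ):ℝ) + 1 = σ - ((k+j:ℕ):ℝ) := by push_cast; ring
      have e2 : θ₂ 1 (θ₂ (-((k+j+1:ℕ):ℝ)) ρ) = θ₂ (-((k+j:ℕ):ℝ)) ρ := by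
        rw [gcomp hθ₂]; congr 1; push_cast; ring
      rw [hlink (k+j), e1, e2, ih k] at hcoc
      have e3 : ((j:ℕ):ℝ) + 1 = (((j+1:ℕ)):ℝ) := by push_cast; ring
      rw [e3] at hcoc
      exact hcoc
  -- the trace, defined from the backward chain
  have hkk : ∀ r : ℝ, 0 ≤ r + (⌈-r⌉₊ : ℝ) := by
    intro r
    have := Nat.le_ceil (-r)
    linarith
  set v : ℝ → X := fun r =>
    Φ (r + (⌈-r⌉₊ : ℝ)) (σ - (⌈-r⌉₊ : ℝ)) (θ₂ (-(⌈-r⌉₊ : ℝ)) ρ) (g ⌈-r⌉₊) with hvdef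
  have hmono : ∀ (r : ℝ) (k j : ℕ), 0 ≤ r + (k:ℝ) →
      Φ (r + ((k+j:ℕ):ℝ)) (σ - ((k+j:ℕ):ℝ)) (θ₂ (-((k+j:ℕ):ℝ)) ρ) (g (k+j))
        = Φ (r + (k:ℝ)) (σ - (k:ℝ)) (θ₂ (-(k:ℝ)) ρ) (g k) := by
    intro r k j hrk
    have hcoc := hΦ.cocycle (r + (k:ℝ)) ((j:ℕ):ℝ) hrk (Nat.cast_nonneg j)
      (σ - ((k+j:ℕ):ℝ)) (θ₂ (-((k+j:ℕ):ℝ)) ρ) (g (k+j))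
    have e1 : σ - ((k+j:ℕ):ℝ) + ((j:ℕ):ℝ) = σ - (k:ℝ) := by push_cast; ring
    have e2 : θ₂ ((j:ℕ):ℝ) (θ₂ (-((k+j:ℕ):ℝ)) ρ) = θ₂ (-(k:ℝ)) ρ := by
      rw [gcomp hθ₂]; congr 1; push_cast; ring
    rw [hiter j k, e1, e2] at hcoc
    have e3 : r + ((k+j:ℕ):ℝ) = r + (k:ℝ) + ((j:ℕ):ℝ) := by push_cast; ring
    rw [e3, hcoc]
  have hwd : ∀ (r : ℝ) (k : ℕ), 0 ≤ r + (k:ℝ) →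
      Φ (r + (k:ℝ)) (σ - (k:ℝ)) (θ₂ (-(k:ℝ)) ρ) (g k) = v r := by
    intro r k hrk
    set k₀ := ⌈-r⌉₊ with hk₀
    have h1 := hmono r k (max k k₀ - k) hrk
    have h2 := hmono r k₀ (max k k₀ - k₀) (hkk r)
    rw [Nat.add_sub_cancel' (le_max_left k k₀)] at h1
    rw [Nat.add_sub_cancel' (le_max_right k k₀)] at h2
    rw [← h1, h2]
  have hmem : ∀ r : ℝ, v r ∈ A (σ + r) (θ₂ r ρ) := by
    intro r
    set k := ⌈-r⌉₊ with hk
    have hinvr := hinv (r + (k:ℝ)) (hkk r) (σ - (k:ℝ)) (θ₂ (-(k:ℝ)) ρ)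
    dsimp only at hinvr
    have e1 : σ - (k:ℝ) + (r + (k:ℝ)) = σ + r := by ring
    have e2 : θ₂ (r + (k:ℝ)) (θ₂ (-(k:ℝ)) ρ) = θ₂ r ρ := by
      rw [gcomp hθ₂]; congr 1; ring
    rw [e1, e2] at hinvr
    rw [← hinvr]
    exact mem_image_of_mem _ (hgmem k)
  have hflow : ∀ t r : ℝ, 0 ≤ t → Φ t (σ + r) (θ₂ r ρ) (v r) = v (t + r) := by
    intro t r ht
    set k := ⌈-r⌉₊ with hk
    have hcoc := hΦ.cocycle t (r + (k:ℝ)) ht (hkk r) (σ - (k:ℝ)) (θ₂ (-(k:ℝ)) ρ) (g k)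
    have e1 : σ - (k:ℝ) + (r + (k:ℝ)) = σ + r := by ring
    have e2 : θ₂ (r + (k:ℝ)) (θ₂ (-(k:ℝ)) ρ) = θ₂ r ρ := by
      rw [gcomp hθ₂]; congr 1; ring
    have e3 : t + (r + (k:ℝ)) = (t + r) + (k:ℝ) := by ring
    rw [e1, e2, e3] at hcoc
    have h4 : 0 ≤ (t + r) + (k:ℝ) := by
      have := hkk r; linarith
    have h5 := hwd (t + r) k h4
    rw [hcoc] at h5
    rw [← hwd r k (hkk r)]
    exact h5
  refine ⟨v, ?_, hmem, hflow⟩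
  have h6 := hwd 0 0 (by simp)
  rw [← h6]
  simp only [Nat.cast_zero, add_zero]
  exact hΦ.map_zero _ _ _

lemma exists_quasiSolution_through (hθ₂ : IsGroupAction θ₂)
    (hΦ : IsCocycle (fun t h => h + t) θ₂ Φ) {A : ℝ → Ω₂ → Set X}
    (hinv : Invariant (fun t h => h + t) θ₂ Φ A)
    (hAne : ∀ (σ : ℝ) (ρ : Ω₂), (A σ ρ).Nonempty)
    (τ : ℝ) (ω : Ω₂) (x : X) (hx : x ∈ A τ ω) :
    ∃ ξ : ℝ → Ω₂ → X, IsQuasiSolution θ₂ Φ ξ ∧ (∀ (t : ℝ) (ω' : Ω₂), ξ t ω' ∈ A t ω') ∧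
      ξ τ ω = x := by
  classical
  obtain ⟨vA, hvA0, hvAmem, hvAflow⟩ := exists_complete_trace hθ₂ hΦ hinv τ ω x hx
  choose W hW0 hWmem hWflow using fun c : ℝ × Ω₂ =>
    exists_complete_trace hθ₂ hΦ hinv c.1 c.2 (hAne c.1 c.2).some (hAne c.1 c.2).some_mem
  -- the orbit equivalence relation on ℝ × Ω₂
  let rel : ℝ × Ω₂ → ℝ × Ω₂ → Prop := fun p q => q.2 = θ₂ (q.1 - p.1) p.2
  have hcancel : ∀ (a : ℝ) (ρ : Ω₂), θ₂ (-a) (θ₂ a ρ) = ρ := by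
    intro a ρ; rw [gcomp hθ₂]; simp [gzero hθ₂]
  have hrefl : ∀ p, rel p p := by
    intro p; show p.2 = θ₂ (p.1 - p.1) p.2
    rw [sub_self, gzero hθ₂]
  have hsymm : ∀ p q, rel p q → rel q p := by
    intro p q h
    show p.2 = θ₂ (p.1 - q.1) q.2
    rw [h, gcomp hθ₂, show q.1 - p.1 + (p.1 - q.1) = 0 by ring, gzero hθ₂]
  have htrans : ∀ p q r, rel p q → rel q r → rel p r := by
    intro p q r h1 h2
    show r.2 = θ₂ (r.1 - p.1) p.2
    rw [h2, h1, gcomp hθ₂]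
    congr 1; ring
  let st : Setoid (ℝ × Ω₂) := ⟨rel,
    ⟨fun p => hrefl p, fun {p q} h => hsymm p q h, fun {p q r} h1 h2 => htrans p q r h1 h2⟩⟩
  let rep : ℝ × Ω₂ → ℝ × Ω₂ := fun p => (Quotient.mk st p).out
  have hrep : ∀ p, rel (rep p) p := fun p => @Quotient.exact _ st _ _ (Quotient.out_eq _)
  have hrepeq : ∀ p q, rel p q → rep p = rep q := fun p q h =>
    congrArg Quotient.out (Quotient.sound h)
  refine ⟨fun τ' ω' => if ω' = θ₂ (τ' - τ) ω then vA (τ' - τ)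
      else W (rep (τ', ω')) (τ' - (rep (τ', ω')).1), ?_, ?_, ?_⟩
  · -- quasi-solution property
    intro t τ' ht ω'
    dsimp only
    by_cases h : ω' = θ₂ (τ' - τ) ω
    · have hcond2 : θ₂ t ω' = θ₂ (t + τ' - τ) ω := by
        rw [h, gcomp hθ₂]; congr 1; ring
      rw [if_pos h, if_pos hcond2]
      have hfl := hvAflow t (τ' - τ) ht
      rw [show τ + (τ' - τ) = τ' by ring, ← h,
        show t + (τ' - τ) = t + τ' - τ by ring] at hfl
      exact hfl
    · have hcond2 : ¬ (θ₂ t ω' = θ₂ (t + τ' - τ) ω) := by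
        intro hc
        refine h ?_
        have h1 := congrArg (θ₂ (-t)) hc
        rw [hcancel t ω', gcomp hθ₂, show t + τ' - τ + -t = τ' - τ by ring] at h1
        exact h1
      have hrel : rel (τ', ω') (t + τ', θ₂ t ω') := by
        show θ₂ t ω' = θ₂ (t + τ' - τ') ω'
        congr 1; ring
      have hrepe : rep (τ', ω') = rep (t + τ', θ₂ t ω') := hrepeq _ _ hrel
      rw [if_neg h, if_neg hcond2, ← hrepe]
      set c := rep (τ', ω') with hcdef
      have hc1 : ω' = θ₂ (τ' - c.1) c.2 := hrep (τ', ω')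
      have hfl := hWflow c t (τ' - c.1) ht
      rw [show c.1 + (τ' - c.1) = τ' by ring, ← hc1,
        show t + (τ' - c.1) = t + τ' - c.1 by ring] at hfl
      exact hfl
  · -- membership in `A`
    intro t' ω'
    dsimp only
    by_cases h : ω' = θ₂ (t' - τ) ω
    · rw [if_pos h]
      have := hvAmem (t' - τ)
      rw [show τ + (t' - τ) = t' by ring, ← h] at this
      exact this
    · rw [if_neg h]
      set c := rep (t', ω') with hcdef
      have hc1 : ω' = θ₂ (t' - c.1) c.2 := hrep (t', ω')
      have := hWmem c (t' - c.1)
      rw [show c.1 + (t' - c.1) = t' by ring, ← hc1] at this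
      exact this
  · -- value at `(τ, ω)`
    have hcond : ω = θ₂ (τ - τ) ω := by rw [sub_self, gzero hθ₂]
    dsimp only
    rw [if_pos hcond, sub_self, hvA0]

end Quasi

end Attractor

theorem attractor_eq_quasiSolutions
    {Ω₂ X : Type*}
    [MetricSpace X] [CompleteSpace X] [SecondCountableTopology X]
    [MeasurableSpace X] [BorelSpace X]
    [MeasurableSpace Ω₂] (P : Measure Ω₂) [IsProbabilityMeasure P]
    (θ₂ : ℝ → Ω₂ → Ω₂)
    (hθ₂ : IsGroupAction θ₂)
    (hθ₂meas : Measurable fun p : ℝ × Ω₂ => θ₂ p.1 p.2)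
    (hθ₂pres : ∀ t : ℝ, MeasurePreserving (θ₂ t) P P)
    (Φ : ℝ → ℝ → Ω₂ → X → X)
    (hΦ : IsCocycle (fun t h => h + t) θ₂ Φ)
    (𝒟 : Set (ℝ → Ω₂ → Set X))
    (h𝒟ne : FamiliesOfNonemptySets 𝒟)
    (h𝒟nc : NeighborhoodClosed 𝒟)
    (hac : AsymptoticallyCompact (fun t h => h + t) θ₂ Φ 𝒟)
    (K : ℝ → Ω₂ → Set X)
    (hK : IsClosedMeasurableAbsorbingSet (fun t h => h + t) θ₂ Φ P 𝒟 K) :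
    ∃ A : ℝ → Ω₂ → Set X, IsPullbackAttractor (fun t h => h + t) θ₂ Φ P 𝒟 A ∧
      (∀ A' : ℝ → Ω₂ → Set X,
        IsPullbackAttractor (fun t h => h + t) θ₂ Φ P 𝒟 A' → A' = A) ∧
      ∀ (τ : ℝ) (ω : Ω₂), A τ ω =
        {x : X | ∃ ξ : ℝ → Ω₂ → X, IsQuasiSolution θ₂ Φ ξ ∧
          (∃ D ∈ 𝒟, ∀ (t : ℝ) (ω' : Ω₂), ξ t ω' ∈ D t ω') ∧ ξ τ ω = x} := by
  classical
  obtain ⟨hKabs, hKclne, hKm⟩ := hK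
  have hKcl : ∀ (σ : ℝ) (ω : Ω₂), IsClosed (K σ ω) := fun σ ω => (hKclne σ ω).1
  have hKne : ∀ (σ : ℝ) (ω : Ω₂), (K σ ω).Nonempty := fun σ ω => (hKclne σ ω).2
  have hΩne : Nonempty Ω₂ := by
    by_contra hcon
    rw [not_nonempty_iff] at hcon
    have h1 : P univ = 1 := measure_univ
    have h2 : (univ : Set Ω₂) = ∅ := univ_eq_empty_iff.2 hcon
    rw [h2, measure_empty] at h1
    exact zero_ne_one h1
  haveI : Nonempty X := ⟨(hKne 0 (Classical.arbitrary Ω₂)).some⟩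
  have hattr : IsPullbackAttractor (fun t h => h + t) θ₂ Φ P 𝒟 (attrSet θ₂ Φ K) :=
    ⟨attrSet_mem_D hθ₂ hΦ h𝒟ne h𝒟nc hac hKabs hKcl,
      attrSet_isCompact hθ₂ hΦ hac hKabs,
      fun τ x => attrSet_infDist_nullMeasurable hθ₂ hθ₂pres hθ₂meas hΦ h𝒟ne hac hKabs
        hKcl hKne hKm τ x,
      attrSet_invariant hθ₂ hΦ hac hKabs,
      fun B hB => attrSet_attracts hθ₂ hΦ hac hKabs hB⟩
  refine ⟨attrSet θ₂ Φ K, hattr, fun A' hA' => attractor_unique hθ₂ hattr hA', ?_⟩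
  intro τ ω
  ext x
  simp only [mem_setOf_eq]
  constructor
  · intro hx
    obtain ⟨ξ, hξ, hξA, hξτ⟩ := exists_quasiSolution_through hθ₂ hΦ hattr.invariant
      (fun σ ρ => attrSet_nonempty hθ₂ hΦ h𝒟ne hac hKabs σ ρ) τ ω x hx
    exact ⟨ξ, hξ, ⟨attrSet θ₂ Φ K, hattr.mem, hξA⟩, hξτ⟩
  · rintro ⟨ξ, hξ, ⟨D, hD, hξD⟩, rfl⟩
    exact quasiSolution_mem hθ₂ (fun σ ρ => (hattr.compact σ ρ).isClosed)
      (fun B hB => hattr.attracts B hB) hξ hD hξD τ ω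

end RDS
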